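/- In the setting of the interpolation lemma with interpolants m̃_i defined by linear interpolation of m_i with respect to η^δ_ε (fix δ, ε > 0 with η^δ_ε(T) < ∞, and assume conditions (A1) and (A3)): for every t ∈ [S,T] at which the monotone function η^δ_ε is continuous, m̃_i(t) − m_i(t) → 0 as i → ∞. -/

import Mathlib

open Set Metric Filter MeasureTheory
open scoped ENNReal Topology Classical

noncomputable section

/-- Euclidean space `ℝ^n`. -/
abbrev Eucl (n : ℕ) : Type := EuclideanSpace ℝ (Fin n)

/-- A (strict) partition `a = τ 0 < τ 1 < ⋯ < τ N = b` of the interval `[a,b]`. -/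
def IsPartition (a b : ℝ) (N : ℕ) (τ : ℕ → ℝ) : Prop :=
  0 < N ∧ τ 0 = a ∧ τ N = b ∧ ∀ i < N, τ i < τ (i + 1)

/-- The mesh (diameter) of the partition `τ` is at most `ε`. -/
def MeshLE (N : ℕ) (τ : ℕ → ℝ) (ε : ℝ) : Prop :=
  ∀ i < N, τ (i + 1) - τ i ≤ ε

/-- The tube `x̄([s,t]) + δ B` around the arc `x̄` on `[s,t]`. -/
def tube {n : ℕ} (xbar : ℝ → Eucl n) (s t δ : ℝ) : Set (Eucl n) :=
  {y | ∃ r ∈ Icc s t, dist y (xbar r) ≤ δ}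

/-- `I^δ(𝒯) = Σᵢ sup { d_H (F(t_{i+1},x,a), F(t_i,x,a)) : x ∈ x̄([t_i,t_{i+1}]) + δB, a ∈ A }`. -/
def variSum {n k : ℕ} (F : ℝ → Eucl n → Eucl k → Set (Eucl n)) (xbar : ℝ → Eucl n)
    (A : Set (Eucl k)) (δ : ℝ) (N : ℕ) (τ : ℕ → ℝ) : ℝ≥0∞ :=
  ∑ i ∈ Finset.range N,
    ⨆ x ∈ tube xbar (τ i) (τ (i + 1)) δ, ⨆ a ∈ A,
      EMetric.hausdorffEdist (F (τ (i + 1)) x a) (F (τ i) x a)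

/-- `η^δ_ε(t)`: the `(δ,ε)`-perturbed cumulative variation of `F` along `x̄`, uniformly
over `A`, on the base interval `[S,t]`.  (For `t = S` there are no partitions and the
supremum is `0`.) -/
def etaE {n k : ℕ} (F : ℝ → Eucl n → Eucl k → Set (Eucl n)) (xbar : ℝ → Eucl n)
    (A : Set (Eucl k)) (S δ ε t : ℝ) : ℝ≥0∞ :=
  ⨆ (N : ℕ) (τ : ℕ → ℝ) (_ : IsPartition S t N τ) (_ : MeshLE N τ ε),
    variSum F xbar A δ N τ

/-- `η^δ(t) = lim_{ε ↓ 0} η^δ_ε(t)` (the limit of a monotone family: the infimum). -/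
def etaD {n k : ℕ} (F : ℝ → Eucl n → Eucl k → Set (Eucl n)) (xbar : ℝ → Eucl n)
    (A : Set (Eucl k)) (S δ t : ℝ) : ℝ≥0∞ :=
  ⨅ (ε : ℝ) (_ : 0 < ε), etaE F xbar A S δ ε t

/-- `η(t) = lim_{δ ↓ 0} η^δ(t)`: the cumulative variation function of `F` along `x̄`,
uniformly over `A`. -/
def eta {n k : ℕ} (F : ℝ → Eucl n → Eucl k → Set (Eucl n)) (xbar : ℝ → Eucl n)
    (A : Set (Eucl k)) (S t : ℝ) : ℝ≥0∞ :=
  ⨅ (δ : ℝ) (_ : 0 < δ), etaD F xbar A S δ t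

/-- Hypothesis (C1): nonempty closed values, measurability in `t`, and uniform
boundedness `F(t,x,a) ⊆ cB` near the arc. -/
def HypC1 {n k : ℕ} (F : ℝ → Eucl n → Eucl k → Set (Eucl n)) (xbar : ℝ → Eucl n)
    (A : Set (Eucl k)) (S T δbar : ℝ) : Prop :=
  (∀ t x a, (F t x a).Nonempty ∧ IsClosed (F t x a)) ∧
  (∀ (x : Eucl n) (a : Eucl k), ∀ U : Set (Eucl n), IsOpen U →
     MeasurableSet {t | t ∈ Icc S T ∧ (F t x a ∩ U).Nonempty}) ∧
  (∃ c > (0 : ℝ), ∀ t ∈ Icc S T, ∀ a ∈ A, ∀ x : Eucl n, dist x (xbar t) ≤ δbar →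
     F t x a ⊆ closedBall 0 c)

/-- Hypothesis (C2): `F(t,x,a) ⊆ F(t,x',a') + γ(|x-x'| + |a-a'|)B` near the arc, where
`γ` is a modulus of continuity. -/
def HypC2 {n k : ℕ} (F : ℝ → Eucl n → Eucl k → Set (Eucl n)) (xbar : ℝ → Eucl n)
    (A : Set (Eucl k)) (S T δbar : ℝ) (γ : ℝ → ℝ) : Prop :=
  ContinuousOn γ (Ici 0) ∧ MonotoneOn γ (Ici 0) ∧ γ 0 = 0 ∧ (∀ r ≥ (0 : ℝ), 0 ≤ γ r) ∧
  ∀ t ∈ Icc S T, ∀ x x' : Eucl n, ∀ a ∈ A, ∀ a' ∈ A,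
    dist x (xbar t) ≤ δbar → dist x' (xbar t) ≤ δbar →
    ∀ y ∈ F t x a, ∃ z ∈ F t x' a', dist y z ≤ γ (dist x x' + dist a a')

end

noncomputable section

/-- The piecewise-constant function
`m(t) = m₀ + Σ_{j=1}^{N-2} d_j 𝟙_{[τ_j, τ_{j+1})}(t) + d_{N-1} 𝟙_{[τ_{N-1}, T]}(t)`. -/
def stepFun {n : ℕ} (T : ℝ) (N : ℕ) (τ : ℕ → ℝ) (m0 : Eucl n) (d : ℕ → Eucl n)
    (t : ℝ) : Eucl n :=
  m0 + (∑ j ∈ Finset.Icc 1 (N - 2), Set.indicator (Set.Ico (τ j) (τ (j + 1))) (fun _ => d j) t)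
     + Set.indicator (Set.Icc (τ (N - 1)) T) (fun _ => d (N - 1)) t

end


section AuxLemmas

private lemma aux_tau_le {N : ℕ} {τ : ℕ → ℝ} (h : ∀ i < N, τ i < τ (i + 1))
    {a b : ℕ} (hab : a ≤ b) (hb : b ≤ N) : τ a ≤ τ b := by
  obtain ⟨e, rfl⟩ := Nat.exists_eq_add_of_le hab
  clear hab
  induction e with
  | zero => exact le_rfl
  | succ e ih =>
      exact le_trans (ih (by omega)) (le_of_lt (h (a + e) (by omega)))

private lemma aux_tau_lt {N : ℕ} {τ : ℕ → ℝ} (h : ∀ i < N, τ i < τ (i + 1))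
    {a b : ℕ} (hab : a < b) (hb : b ≤ N) : τ a < τ b := by
  have h1 : τ a ≤ τ (b - 1) := aux_tau_le h (by omega) (by omega)
  have h2 : τ (b - 1) < τ (b - 1 + 1) := h _ (by omega)
  rw [Nat.sub_add_cancel (by omega)] at h2
  exact lt_of_le_of_lt h1 h2

private lemma aux_tau_diff {N : ℕ} {τ : ℕ → ℝ} {c : ℝ}
    (h : ∀ i < N, τ (i + 1) - τ i ≤ c) (hc : 0 ≤ c)
    {a b : ℕ} (hab : a ≤ b) (hb : b ≤ N) : τ b - τ a ≤ ((b - a : ℕ) : ℝ) * c := by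
  obtain ⟨e, rfl⟩ := Nat.exists_eq_add_of_le hab
  clear hab
  induction e with
  | zero => simp
  | succ e ih =>
      have h5 : a + (e + 1) = a + e + 1 := by omega
      rw [h5]
      have h1 : τ (a + e + 1) - τ (a + e) ≤ c := h _ (by omega)
      have h2 := ih (by omega)
      have h3 : (a + e + 1 - a : ℕ) = (a + e - a : ℕ) + 1 := by omega
      have h3' : ((a + e + 1 - a : ℕ) : ℝ) = ((a + e - a : ℕ) : ℝ) + 1 := by
        rw [h3]; push_cast; ring
      have h4 : (((a + e - a : ℕ) : ℝ) + 1) * c = ((a + e - a : ℕ) : ℝ) * c + c := by ring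
      rw [h3', h4]
      linarith

private lemma aux_etaE_mono {n k : ℕ} (F : ℝ → Eucl n → Eucl k → Set (Eucl n))
    (xbar : ℝ → Eucl n) (A : Set (Eucl k)) (S δ : ℝ) {ε : ℝ} (hε : 0 < ε)
    {t1 t2 : ℝ} (h12 : t1 ≤ t2) :
    etaE F xbar A S δ ε t1 ≤ etaE F xbar A S δ ε t2 := by
  rcases eq_or_lt_of_le h12 with rfl | hlt
  · exact le_rfl
  unfold etaE
  refine iSup_le fun N => iSup_le fun τ => iSup_le fun hp => iSup_le fun hm => ?_
  set M : ℕ := max 1 ⌈(t2 - t1) / ε⌉₊ with hMdef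
  have hM1 : 1 ≤ M := le_max_left _ _
  have hMpos : (0 : ℝ) < (M : ℝ) := by exact_mod_cast hM1
  set st : ℝ := (t2 - t1) / M with hstdef
  have hstpos : 0 < st := div_pos (by linarith) hMpos
  have hstε : st ≤ ε := by
    rw [hstdef, div_le_iff₀ hMpos]
    have hle1 : (t2 - t1) / ε ≤ (⌈(t2 - t1) / ε⌉₊ : ℝ) := Nat.le_ceil _
    have hle2 : ((⌈(t2 - t1) / ε⌉₊ : ℕ) : ℝ) ≤ (M : ℝ) := by exact_mod_cast le_max_right 1 _
    have h6 := (div_le_iff₀ hε).mp (hle1.trans hle2)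
    nlinarith
  set τ' : ℕ → ℝ := fun j => if j ≤ N then τ j else t1 + ((j : ℝ) - N) * st with hτ'def
  have hNt1 : τ N = t1 := hp.2.2.1
  have h'lo : ∀ j, j ≤ N → τ' j = τ j := fun j hj => if_pos hj
  have h'hi : ∀ j, N ≤ j → τ' j = t1 + ((j : ℝ) - N) * st := by
    intro j hj
    rcases eq_or_lt_of_le hj with heq | hlt'
    · rw [← heq, h'lo N le_rfl, hNt1]; simp
    · simp only [hτ'def]; rw [if_neg (by omega)]
  have hp' : IsPartition S t2 (N + M) τ' := by
    refine ⟨by have := hp.1; omega, ?_, ?_, ?_⟩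
    · rw [h'lo 0 (Nat.zero_le _), hp.2.1]
    · rw [h'hi (N + M) (by omega)]
      have hc : ((N + M : ℕ) : ℝ) - (N : ℝ) = (M : ℝ) := by push_cast; ring
      rw [hc, hstdef]
      field_simp
      ring
    · intro j hjNM
      rcases Nat.lt_or_ge j N with hcase | hcase
      · rw [h'lo j (by omega), h'lo (j + 1) (by omega)]
        exact hp.2.2.2 j hcase
      · rw [h'hi j hcase, h'hi (j + 1) (by omega)]
        push_cast
        have hx : ((j : ℝ) + 1 - N) * st = ((j : ℝ) - N) * st + st := by ring
        linarith
  have hm' : MeshLE (N + M) τ' ε := by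
    intro j hjNM
    rcases Nat.lt_or_ge j N with hcase | hcase
    · rw [h'lo j (by omega), h'lo (j + 1) (by omega)]
      exact hm j hcase
    · rw [h'hi j hcase, h'hi (j + 1) (by omega)]
      push_cast
      have hx : ((j : ℝ) + 1 - N) * st = ((j : ℝ) - N) * st + st := by ring
      linarith
  have hvar : variSum F xbar A δ N τ ≤ variSum F xbar A δ (N + M) τ' := by
    unfold variSum
    have h1 : ∀ i ∈ Finset.range N,
        (⨆ x ∈ tube xbar (τ i) (τ (i + 1)) δ, ⨆ a ∈ A,
          EMetric.hausdorffEdist (F (τ (i + 1)) x a) (F (τ i) x a))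
        = ⨆ x ∈ tube xbar (τ' i) (τ' (i + 1)) δ, ⨆ a ∈ A,
          EMetric.hausdorffEdist (F (τ' (i + 1)) x a) (F (τ' i) x a) := by
      intro i hi
      rw [Finset.mem_range] at hi
      rw [h'lo i (by omega), h'lo (i + 1) (by omega)]
    rw [Finset.sum_congr rfl h1]
    exact Finset.sum_le_sum_of_subset (Finset.range_subset_range.mpr (by omega))
  exact le_trans hvar
    (le_iSup_of_le (N + M) (le_iSup_of_le τ' (le_iSup_of_le hp' (le_iSup_of_le hm' le_rfl))))

private lemma stepFun_apply' {n : ℕ} {S T : ℝ} {N : ℕ} {τ : ℕ → ℝ} (hp : IsPartition S T N τ)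
    (m0 : Eucl n) (d : ℕ → Eucl n) {j : ℕ} (hj : j < N) {t : ℝ}
    (ht1 : τ j ≤ t) (ht2 : t < τ (j + 1)) :
    stepFun T N τ m0 d t =
      m0 + (if j ∈ Finset.Icc 1 (N - 2) then d j else 0) +
        (if j = N - 1 then d (N - 1) else 0) := by
  have hmτ := hp.2.2.2
  have hNT : τ N = T := hp.2.2.1
  have hkey : ∀ l ∈ Finset.Icc 1 (N - 2),
      Set.indicator (Set.Ico (τ l) (τ (l + 1))) (fun _ => d l) t = if l = j then d j else 0 := by
    intro l hl
    rw [Finset.mem_Icc] at hl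
    by_cases hlj : l = j
    · subst hlj
      rw [if_pos rfl, Set.indicator_of_mem (Set.mem_Ico.mpr ⟨ht1, ht2⟩)]
    · rw [if_neg hlj, Set.indicator_of_notMem]
      rintro ⟨hm1, hm2⟩
      rcases Nat.lt_or_ge l j with hc | hc
      · have hx : τ (l + 1) ≤ τ j := aux_tau_le hmτ (by omega) (by omega)
        linarith
      · have hc' : j < l := by omega
        have hx : τ (j + 1) ≤ τ l := aux_tau_le hmτ (by omega) (by omega)
        linarith
  have hsum : (∑ l ∈ Finset.Icc 1 (N - 2),
      Set.indicator (Set.Ico (τ l) (τ (l + 1))) (fun _ => d l) t)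
      = if j ∈ Finset.Icc 1 (N - 2) then d j else 0 := by
    rw [Finset.sum_congr rfl hkey, Finset.sum_ite_eq' (Finset.Icc 1 (N - 2)) j (fun _ => d j)]
  have hind : Set.indicator (Set.Icc (τ (N - 1)) T) (fun _ => d (N - 1)) t
      = if j = N - 1 then d (N - 1) else 0 := by
    by_cases hj' : j = N - 1
    · have htT : t ≤ T := by
        have hx : τ (j + 1) ≤ τ N := aux_tau_le hmτ (by omega) le_rfl
        rw [hNT] at hx
        linarith
      subst hj'
      rw [if_pos rfl, Set.indicator_of_mem (Set.mem_Icc.mpr ⟨ht1, htT⟩)]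
    · rw [if_neg hj', Set.indicator_of_notMem]
      rintro ⟨hm1, hm2⟩
      have hx : τ (j + 1) ≤ τ (N - 1) := aux_tau_le hmτ (by omega) (by omega)
      linarith
  unfold stepFun
  rw [hsum, hind]

private lemma stepFun_T' {n : ℕ} {S T : ℝ} {N : ℕ} {τ : ℕ → ℝ} (hp : IsPartition S T N τ)
    (m0 : Eucl n) (d : ℕ → Eucl n) :
    stepFun T N τ m0 d T = m0 + d (N - 1) := by
  have hmτ := hp.2.2.2
  have hNT : τ N = T := hp.2.2.1
  have hzero : ∀ l ∈ Finset.Icc 1 (N - 2),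
      Set.indicator (Set.Ico (τ l) (τ (l + 1))) (fun _ => d l) T = 0 := by
    intro l hl
    rw [Finset.mem_Icc] at hl
    apply Set.indicator_of_notMem
    rintro ⟨-, hm2⟩
    have hx : τ (l + 1) ≤ τ N := aux_tau_le hmτ (by omega) le_rfl
    rw [hNT] at hx
    linarith
  have hτN1 : τ (N - 1) ≤ T := by
    have hx : τ (N - 1) ≤ τ N := aux_tau_le hmτ (by omega) le_rfl
    rwa [hNT] at hx
  unfold stepFun
  rw [Finset.sum_congr rfl hzero, Finset.sum_const_zero,
    Set.indicator_of_mem (Set.mem_Icc.mpr ⟨hτN1, le_rfl⟩), add_zero]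

private lemma stepFun_pt' {n : ℕ} {S T : ℝ} {N : ℕ} {τ : ℕ → ℝ} (hp : IsPartition S T N τ)
    (m0 : Eucl n) (d : ℕ → Eucl n) (hN2 : 2 ≤ N) {l : ℕ} (hl : l ≤ N) :
    ∃ c : Eucl n, stepFun T N τ m0 d (τ l) = m0 + c ∧
      (c = 0 ∨ ∃ m, 1 ≤ m ∧ m ≤ N ∧ (m = l ∨ m + 1 = l) ∧ c = d m) := by
  rcases eq_or_lt_of_le hl with rfl | hlN
  · rw [hp.2.2.1, stepFun_T' hp m0 d]
    exact ⟨d (l - 1), rfl, Or.inr ⟨l - 1, by omega, by omega, Or.inr (by omega), rfl⟩⟩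
  · have hlt : τ l < τ (l + 1) := aux_tau_lt hp.2.2.2 (Nat.lt_succ_self l) (by omega)
    rw [stepFun_apply' hp m0 d hlN le_rfl hlt]
    by_cases h1 : l ∈ Finset.Icc 1 (N - 2)
    · have h1' := Finset.mem_Icc.mp h1
      rw [if_pos h1, if_neg (by omega)]
      exact ⟨d l, by rw [add_zero], Or.inr ⟨l, by omega, by omega, Or.inl rfl, rfl⟩⟩
    · rw [if_neg h1]
      by_cases h2 : l = N - 1
      · rw [if_pos h2]
        exact ⟨d (N - 1), by rw [add_zero], Or.inr ⟨N - 1, by omega, by omega,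
          Or.inl (by omega), rfl⟩⟩
      · rw [if_neg h2]
        exact ⟨0, by rw [add_zero, add_zero], Or.inl rfl⟩

private lemma key_est {n : ℕ} {S T : ℝ} {Ni : ℕ} {τi : ℕ → ℝ} (hp : IsPartition S T Ni τi)
    (H : ℝ → ℝ≥0∞) (hmono : ∀ a b : ℝ, a ≤ b → H a ≤ H b) (hfin : H T ≠ ⊤)
    (m0 : Eucl n) (d : ℕ → Eucl n)
    (hd : ∀ m, 1 ≤ m → m ≤ Ni → ENNReal.ofReal ‖d m‖ ≤ H (τi m) - H (τi (m - 1)))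
    (hN2 : 2 ≤ Ni) {j : ℕ} (hjN : j < Ni) {t : ℝ} (h1 : τi j ≤ t) (h2 : t < τi (j + 1))
    (v : Eucl n)
    (hv : v = stepFun T Ni τi m0 d (τi j) +
        ((H t - H (τi j)).toReal / (H (τi (j + 1)) - H (τi j)).toReal) •
          (stepFun T Ni τi m0 d (τi (j + 1)) - stepFun T Ni τi m0 d (τi j))) :
    ‖v - stepFun T Ni τi m0 d t‖ ≤
      2 * ((H (τi (j + 1))).toReal - (H (τi (j - 2))).toReal) := by
  have hmτ := hp.2.2.2
  have hNT : τi Ni = T := hp.2.2.1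
  have hτT : ∀ l, l ≤ Ni → τi l ≤ T := by
    intro l hl
    have hx := aux_tau_le hmτ hl le_rfl
    rwa [hNT] at hx
  have hHfin : ∀ l, l ≤ Ni → H (τi l) ≠ ⊤ := fun l hl =>
    (lt_of_le_of_lt (hmono _ _ (hτT l hl)) hfin.lt_top).ne
  have hs : stepFun T Ni τi m0 d t = stepFun T Ni τi m0 d (τi j) := by
    rw [stepFun_apply' hp m0 d hjN h1 h2,
      stepFun_apply' hp m0 d hjN le_rfl (aux_tau_lt hmτ (Nat.lt_succ_self j) hjN)]
  obtain ⟨c0, hc0, hc0'⟩ := stepFun_pt' hp m0 d hN2 (le_of_lt hjN)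
  obtain ⟨c1, hc1, hc1'⟩ := stepFun_pt' hp m0 d hN2 (show j + 1 ≤ Ni by omega)
  have hqple : (H (τi (j - 2))).toReal ≤ (H (τi (j + 1))).toReal :=
    ENNReal.toReal_mono (hHfin _ (by omega)) (hmono _ _ (aux_tau_le hmτ (by omega) (by omega)))
  have hbound : ∀ (c : Eucl n) (l : ℕ), (l = j ∨ l = j + 1) →
      (c = 0 ∨ ∃ m, 1 ≤ m ∧ m ≤ Ni ∧ (m = l ∨ m + 1 = l) ∧ c = d m) →
      ‖c‖ ≤ (H (τi (j + 1))).toReal - (H (τi (j - 2))).toReal := by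
    intro c l hlj hc
    rcases hc with rfl | ⟨m, hm1, hmN, hml, rfl⟩
    · rw [norm_zero]; linarith
    · have h3 := hd m hm1 hmN
      have hsub_ne : H (τi m) - H (τi (m - 1)) ≠ ⊤ :=
        (lt_of_le_of_lt (le_trans tsub_le_self (hmono _ _ (hτT m hmN))) hfin.lt_top).ne
      have h4 : ‖d m‖ ≤ (H (τi m) - H (τi (m - 1))).toReal := by
        have h5 := ENNReal.toReal_mono hsub_ne h3
        rwa [ENNReal.toReal_ofReal (norm_nonneg _)] at h5
      have h6 : (H (τi m) - H (τi (m - 1))).toReal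
          = (H (τi m)).toReal - (H (τi (m - 1))).toReal :=
        ENNReal.toReal_sub_of_le (hmono _ _ (aux_tau_le hmτ (by omega) hmN)) (hHfin m hmN)
      have h7 : (H (τi m)).toReal ≤ (H (τi (j + 1))).toReal :=
        ENNReal.toReal_mono (hHfin _ (by omega))
          (hmono _ _ (aux_tau_le hmτ (by omega) (by omega)))
      have h8 : (H (τi (j - 2))).toReal ≤ (H (τi (m - 1))).toReal :=
        ENNReal.toReal_mono (hHfin _ (by omega))
          (hmono _ _ (aux_tau_le hmτ (by omega) (by omega)))
      linarith
  have hr : |((H t - H (τi j)).toReal / (H (τi (j + 1)) - H (τi j)).toReal)| ≤ 1 := by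
    have hb_ne : H (τi (j + 1)) - H (τi j) ≠ ⊤ :=
      (lt_of_le_of_lt (le_trans tsub_le_self (hmono _ _ (hτT _ (by omega)))) hfin.lt_top).ne
    have hab : (H t - H (τi j)).toReal ≤ (H (τi (j + 1)) - H (τi j)).toReal :=
      ENNReal.toReal_mono hb_ne (tsub_le_tsub_right (hmono _ _ (le_of_lt h2)) _)
    have ha0 : 0 ≤ (H t - H (τi j)).toReal := ENNReal.toReal_nonneg
    have hb0 : 0 ≤ (H (τi (j + 1)) - H (τi j)).toReal := ENNReal.toReal_nonneg
    rcases eq_or_lt_of_le hb0 with hb' | hb'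
    · rw [← hb', div_zero, abs_zero]; exact zero_le_one
    · rw [abs_of_nonneg (div_nonneg ha0 hb0), div_le_one hb']
      exact hab
  have hcancel : stepFun T Ni τi m0 d (τi j) +
      ((H t - H (τi j)).toReal / (H (τi (j + 1)) - H (τi j)).toReal) •
        (stepFun T Ni τi m0 d (τi (j + 1)) - stepFun T Ni τi m0 d (τi j))
      - stepFun T Ni τi m0 d (τi j)
      = ((H t - H (τi j)).toReal / (H (τi (j + 1)) - H (τi j)).toReal) •
        (stepFun T Ni τi m0 d (τi (j + 1)) - stepFun T Ni τi m0 d (τi j)) := by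
    abel
  rw [hv, hs, hcancel, norm_smul, Real.norm_eq_abs]
  have hΔ : ‖stepFun T Ni τi m0 d (τi (j + 1)) - stepFun T Ni τi m0 d (τi j)‖
      ≤ 2 * ((H (τi (j + 1))).toReal - (H (τi (j - 2))).toReal) := by
    have e : stepFun T Ni τi m0 d (τi (j + 1)) - stepFun T Ni τi m0 d (τi j) = c1 - c0 := by
      rw [hc1, hc0]; abel
    rw [e]
    have hns := norm_sub_le c1 c0
    have b0 := hbound c0 j (Or.inl rfl) hc0'
    have b1 := hbound c1 (j + 1) (Or.inr rfl) hc1'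
    linarith
  have hfinal := mul_le_mul hr hΔ (norm_nonneg _) zero_le_one
  rw [one_mul] at hfinal
  exact hfinal

end AuxLemmas

/-- In the setting of the interpolation lemma (mesh of the partitions
tending to `0`, jumps dominated by increments of `η^δ_ε`), at every point `t ∈ [S,T]`
where the monotone function `η^δ_ε` is continuous, `m̃_i(t) − m_i(t) → 0` as `i → ∞`. -/
theorem stmt13 {n k : ℕ} (S T : ℝ) (hST : S < T)
    (A : Set (Eucl k)) (hA : IsCompact A)
    (F : ℝ → Eucl n → Eucl k → Set (Eucl n))
    (hFval : ∀ t x a, (F t x a).Nonempty ∧ IsClosed (F t x a))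
    (xbar : ℝ → Eucl n) (hx : ContinuousOn xbar (Icc S T))
    (δ ε : ℝ) (hδ : 0 < δ) (hε : 0 < ε)
    (hfin : etaE F xbar A S δ ε T < ⊤)
    (N : ℕ → ℕ) (τ : ℕ → ℕ → ℝ) (hpart : ∀ i, IsPartition S T (N i) (τ i))
    (hA1 : ∀ ε' > (0 : ℝ), ∃ I0 : ℕ, ∀ i ≥ I0, MeshLE (N i) (τ i) ε')
    (m0 : ℕ → Eucl n) (d : ℕ → ℕ → Eucl n)
    (I0 : ℕ)
    (hA3 : ∀ i ≥ I0, ∀ j : ℕ, 1 ≤ j → j ≤ N i →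
      ENNReal.ofReal ‖d i j‖ ≤
        etaE F xbar A S δ ε (τ i j) - etaE F xbar A S δ ε (τ i (j - 1)))
    (mt : ℕ → ℝ → Eucl n)
    (hmtT : ∀ i, mt i T = stepFun T (N i) (τ i) (m0 i) (d i) T)
    (hmt : ∀ i, ∀ j < N i, ∀ t ∈ Ico (τ i j) (τ i (j + 1)),
      mt i t = stepFun T (N i) (τ i) (m0 i) (d i) (τ i j) +
        ((etaE F xbar A S δ ε t - etaE F xbar A S δ ε (τ i j)).toReal /
          (etaE F xbar A S δ ε (τ i (j + 1)) - etaE F xbar A S δ ε (τ i j)).toReal) •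
          (stepFun T (N i) (τ i) (m0 i) (d i) (τ i (j + 1)) -
            stepFun T (N i) (τ i) (m0 i) (d i) (τ i j))) :
    ∀ t ∈ Icc S T,
      ContinuousWithinAt (fun s => etaE F xbar A S δ ε s) (Icc S T) t →
      Tendsto (fun i => mt i t - stepFun T (N i) (τ i) (m0 i) (d i) t)
        atTop (𝓝 0) := by
  intro t ht hcont
  rcases eq_or_lt_of_le ht.2 with heq | htT
  · subst heq
    have hz : (fun i => mt i t - stepFun t (N i) (τ i) (m0 i) (d i) t) = fun _ => (0 : Eucl n) := by
      funext i
      rw [hmtT i, sub_self]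
    rw [hz]
    exact tendsto_const_nhds
  · have htS : S ≤ t := ht.1
    have hsat : ∀ i, t < τ i (N i - 1 + 1) := by
      intro i
      have hN0 := (hpart i).1
      have h1 : N i - 1 + 1 = N i := by omega
      rw [h1, (hpart i).2.2.1]
      exact htT
    have hex : ∀ i, ∃ jj, t < τ i (jj + 1) := fun i => ⟨N i - 1, hsat i⟩
    set j : ℕ → ℕ := fun i => Nat.find (hex i) with hjdef
    have hjlt : ∀ i, t < τ i (j i + 1) := fun i => Nat.find_spec (hex i)
    have hjN : ∀ i, j i < N i := by
      intro i
      have h1 : j i ≤ N i - 1 := Nat.find_le (hsat i)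
      have hN0 := (hpart i).1
      omega
    have hjle : ∀ i, τ i (j i) ≤ t := by
      intro i
      rcases Nat.eq_zero_or_pos (j i) with h0 | hpos
      · rw [h0, (hpart i).2.1]
        exact htS
      · have hmin := Nat.find_min (hex i) (show j i - 1 < j i by omega)
        push_neg at hmin
        have h1 : j i - 1 + 1 = j i := by omega
        rwa [h1] at hmin
    have hmem : ∀ i, ∀ l, l ≤ N i → τ i l ∈ Icc S T := by
      intro i l hl
      obtain ⟨hN0, h0, hNT, hmτ⟩ := hpart i
      exact ⟨by rw [← h0]; exact aux_tau_le hmτ (Nat.zero_le l) hl,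
             by rw [← hNT]; exact aux_tau_le hmτ hl le_rfl⟩
    have htendp : Tendsto (fun i => τ i (j i + 1)) atTop (𝓝 t) := by
      rw [Metric.tendsto_atTop]
      intro ε' hε'
      obtain ⟨I1, hI1⟩ := hA1 (ε' / 2) (by linarith)
      refine ⟨I1, fun i hi => ?_⟩
      have hmesh := hI1 i hi (j i) (hjN i)
      have h1 := hjle i
      have h2 := hjlt i
      rw [Real.dist_eq, abs_of_nonneg (by linarith)]
      linarith
    have htendq : Tendsto (fun i => τ i (j i - 2)) atTop (𝓝 t) := by
      rw [Metric.tendsto_atTop]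
      intro ε' hε'
      obtain ⟨I1, hI1⟩ := hA1 (ε' / 4) (by linarith)
      refine ⟨I1, fun i hi => ?_⟩
      have hdiff : τ i (j i + 1) - τ i (j i - 2) ≤ ((j i + 1 - (j i - 2) : ℕ) : ℝ) * (ε' / 4) :=
        aux_tau_diff (hI1 i hi) (by linarith) (by omega) (by have := hjN i; omega)
      have hcast : ((j i + 1 - (j i - 2) : ℕ) : ℝ) ≤ 3 := by
        have hx : (j i + 1 - (j i - 2) : ℕ) ≤ 3 := by omega
        exact_mod_cast hx
      have hmul : ((j i + 1 - (j i - 2) : ℕ) : ℝ) * (ε' / 4) ≤ 3 * (ε' / 4) :=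
        mul_le_mul_of_nonneg_right hcast (by linarith)
      have h1 := hjle i
      have h2 := hjlt i
      have h3 : τ i (j i - 2) ≤ τ i (j i) :=
        aux_tau_le (hpart i).2.2.2 (by omega) (le_of_lt (hjN i))
      rw [Real.dist_eq, abs_of_nonpos (by linarith)]
      linarith
    have hHt_ne : etaE F xbar A S δ ε t ≠ ⊤ :=
      (lt_of_le_of_lt (aux_etaE_mono F xbar A S δ hε ht.2) hfin).ne
    have hcomp : ∀ l : ℕ → ℕ, (∀ i, l i ≤ N i) →
        Tendsto (fun i => τ i (l i)) atTop (𝓝 t) →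
        Tendsto (fun i => (etaE F xbar A S δ ε (τ i (l i))).toReal) atTop
          (𝓝 (etaE F xbar A S δ ε t).toReal) := by
      intro l hlN htd
      have h1 : Tendsto (fun i => τ i (l i)) atTop (𝓝[Icc S T] t) :=
        tendsto_nhdsWithin_of_tendsto_nhds_of_eventually_within _ htd
          (Eventually.of_forall fun i => hmem i (l i) (hlN i))
      have h2 := hcont.tendsto.comp h1
      exact (ENNReal.tendsto_toReal hHt_ne).comp h2
    have htdp := hcomp (fun i => j i + 1) (fun i => hjN i) htendp
    have htdq := hcomp (fun i => j i - 2) (fun i => le_trans (Nat.sub_le _ _) (le_of_lt (hjN i))) htendq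
    have htendg : Tendsto (fun i => 2 * ((etaE F xbar A S δ ε (τ i (j i + 1))).toReal
        - (etaE F xbar A S δ ε (τ i (j i - 2))).toReal)) atTop (𝓝 0) := by
      have hx := Filter.Tendsto.const_mul (2 : ℝ) (htdp.sub htdq)
      simpa using hx
    rw [tendsto_zero_iff_norm_tendsto_zero]
    obtain ⟨I2, hI2⟩ := hA1 ((T - S) / 2) (by linarith)
    apply squeeze_zero' (Eventually.of_forall fun i => norm_nonneg _) ?_ htendg
    filter_upwards [eventually_ge_atTop I0, eventually_ge_atTop I2] with i hi0 hi2
    have hN2 : 2 ≤ N i := by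
      by_contra hcon
      have hN0 := (hpart i).1
      have hN1 : N i = 1 := by omega
      have hm01 : τ i (0 + 1) - τ i 0 ≤ (T - S) / 2 := hI2 i hi2 0 (by omega)
      norm_num at hm01
      rw [(hpart i).2.1] at hm01
      have hτ1 : τ i 1 = T := by rw [← (hpart i).2.2.1, hN1]
      rw [hτ1] at hm01
      linarith
    have hveq := hmt i (j i) (hjN i) t ⟨hjle i, hjlt i⟩
    exact key_est (hpart i) (fun s => etaE F xbar A S δ ε s)
      (fun a b hab => aux_etaE_mono F xbar A S δ hε hab) hfin.ne (m0 i) (d i)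
      (fun m hm1 hmN => hA3 i hi0 m hm1 hmN) hN2 (hjN i) (hjle i) (hjlt i) (mt i t) hveq
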